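/- Let G be a graph containing a singular X–Y linkage P, i.e., a set of |X| = |Y| = k vertex-disjoint paths each with one end in X and the other in Y, such that the paths in P together use all vertices of G and P is the unique X–Y linkage in G. Then G has path-width at most |P|. -/

import Mathlib

/-- A path in a simple graph `G`, bundled with its endpoints. -/
structure PathIn (V : Type) (G : SimpleGraph V) where
  a : V
  b : V
  walk : G.Walk a b
  isPath : walk.IsPath

/-- `P` is an `X`–`Y` linkage: `|X| = |Y|` many pairwise vertex-disjoint paths, each with
first endpoint in `X` and second endpoint in `Y`. -/
def IsLinkage {V : Type} (G : SimpleGraph V) (X Y : Set V) (P : Set (PathIn V G)) : Prop :=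
  P.Finite ∧ P.ncard = X.ncard ∧ X.ncard = Y.ncard ∧
  (∀ p ∈ P, p.a ∈ X ∧ p.b ∈ Y) ∧
  (∀ p ∈ P, ∀ q ∈ P, p ≠ q → ∀ v, v ∈ p.walk.support → v ∉ q.walk.support)

/-- `P` is a singular `X`–`Y` linkage: its paths cover all vertices of `G` and it is the
unique `X`–`Y` linkage in `G`. -/
def IsSingularLinkage {V : Type} (G : SimpleGraph V) (X Y : Set V)
    (P : Set (PathIn V G)) : Prop :=
  IsLinkage G X Y P ∧ (∀ v : V, ∃ p ∈ P, v ∈ p.walk.support) ∧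
  ∀ Q : Set (PathIn V G), IsLinkage G X Y Q → Q = P

/-- A path-decomposition of `G` with bags `bag 0, …, bag (n-1)`. -/
def IsPathDecomp {V : Type} (G : SimpleGraph V) (n : ℕ) (bag : Fin n → Set V) : Prop :=
  (∀ v : V, ∃ i, v ∈ bag i) ∧
  (∀ u v : V, G.Adj u v → ∃ i, u ∈ bag i ∧ v ∈ bag i) ∧
  (∀ i j k : Fin n, i ≤ j → j ≤ k → bag i ∩ bag k ⊆ bag j)

/-- `G` has path-width at most `w`. -/
def PathwidthAtMost {V : Type} (G : SimpleGraph V) (w : ℕ) : Prop :=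
  ∃ (n : ℕ) (bag : Fin n → Set V), IsPathDecomp G n bag ∧ ∀ i, (bag i).ncard ≤ w + 1

set_option linter.unusedSectionVars false

section Stmt2AuxSection
namespace Stmt2Aux

open SimpleGraph Set

variable {V : Type} [DecidableEq V] {G : SimpleGraph V}

lemma start_not_mem_dropUntil {u x y : V} (W : G.Walk x y) (hW : W.IsPath)
    (h : u ∈ W.support) (hne : u ≠ x) : x ∉ (W.dropUntil u h).support := by
  intro hx
  have hsupp : W.support = (W.takeUntil u h).support ++ (W.dropUntil u h).support.tail := by
    conv_lhs => rw [← W.take_spec h]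
    rw [SimpleGraph.Walk.support_append]
  have hnd : W.support.Nodup := hW.support_nodup
  rw [hsupp] at hnd
  have hdisj := List.disjoint_of_nodup_append hnd
  have hxT : x ∈ (W.takeUntil u h).support := SimpleGraph.Walk.start_mem_support _
  rw [SimpleGraph.Walk.support_eq_cons (W.dropUntil u h)] at hx
  rcases List.mem_cons.1 hx with h1 | h2
  · exact hne h1.symm
  · exact hdisj hxT h2

def Good (G : SimpleGraph V) (S X Y : Set V) (P : Set (PathIn V G)) : Prop :=
  P.Finite ∧
  (∀ p ∈ P, ∀ v ∈ p.walk.support, v ∈ S) ∧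
  Set.BijOn (fun p => p.a) P X ∧
  Set.BijOn (fun p => p.b) P Y ∧
  (∀ p ∈ P, ∀ q ∈ P, p ≠ q → ∀ v, v ∈ p.walk.support → v ∉ q.walk.support)

def Sing (G : SimpleGraph V) (S X Y : Set V) (P : Set (PathIn V G)) : Prop :=
  Good G S X Y P ∧ (∀ v ∈ S, ∃ p ∈ P, v ∈ p.walk.support) ∧
  ∀ Q, Good G S X Y Q → Q = P

lemma Good.a_inj {S X Y : Set V} {P : Set (PathIn V G)} (hG : Good G S X Y P)
    {p q : PathIn V G} (hp : p ∈ P) (hq : q ∈ P) (hab : p.a = q.a) : p = q :=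
  hG.2.2.1.2.1 hp hq hab

lemma Good.b_inj {S X Y : Set V} {P : Set (PathIn V G)} (hG : Good G S X Y P)
    {p q : PathIn V G} (hp : p ∈ P) (hq : q ∈ P) (hab : p.b = q.b) : p = q :=
  hG.2.2.2.1.2.1 hp hq hab

lemma Good.eq_of_mem_support {S X Y : Set V} {P : Set (PathIn V G)} (hG : Good G S X Y P)
    {p q : PathIn V G} (hp : p ∈ P) (hq : q ∈ P) {v : V}
    (hvp : v ∈ p.walk.support) (hvq : v ∈ q.walk.support) : p = q := by
  by_contra hne
  exact hG.2.2.2.2 p hp q hq hne v hvp hvq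

lemma Good.ncard_X {S X Y : Set V} {P : Set (PathIn V G)} (hG : Good G S X Y P) :
    X.ncard = P.ncard := by
  rw [← hG.2.2.1.image_eq, Set.ncard_image_of_injOn hG.2.2.1.2.1]

lemma reroute {S X Y : Set V} {P : Set (PathIn V G)}
    (hG : Good G S X Y P) (huniq : ∀ Q, Good G S X Y Q → Q = P)
    (f : PathIn V G → PathIn V G) (w : PathIn V G → V)
    (hf : ∀ p ∈ P, f p ∈ P)
    (hw : ∀ p, p ∈ P → w p ∈ (f p).walk.support)
    (hadj : ∀ p ∈ P, G.Adj p.a (w p))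
    (hwX : ∀ p ∈ P, w p ∉ X)
    (hfix : ∀ p ∈ P, p.walk.support.tail.head? ≠ some (w p))
    (p₀ : PathIn V G) (hp₀ : p₀ ∈ P) : False := by
  classical
  have hPa : ∀ p ∈ P, p.a ∈ X := fun p hp => hG.2.2.1.1 hp
  have hPb : ∀ p ∈ P, p.b ∈ Y := fun p hp => hG.2.2.2.1.1 hp
  -- iterates stay in P
  have hit : ∀ i, f^[i] p₀ ∈ P := by
    intro i; induction i with
    | zero => exact hp₀
    | succ n ih => rw [Function.iterate_succ_apply']; exact hf _ ih
  -- find a periodic point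
  have hper : ∃ c, c ∈ P ∧ ∃ m, 0 < m ∧ f^[m] c = c := by
    haveI : Finite ↥P := hG.1.to_subtype
    obtain ⟨i, j, hij, hEq⟩ :=
      Finite.exists_ne_map_eq_of_infinite (fun i : ℕ => (⟨f^[i] p₀, hit i⟩ : ↥P))
    have hEq' : f^[i] p₀ = f^[j] p₀ := congrArg Subtype.val hEq
    rcases lt_trichotomy i j with h | h | h
    · refine ⟨f^[i] p₀, hit i, j - i, by omega, ?_⟩
      rw [← Function.iterate_add_apply, Nat.sub_add_cancel h.le, ← hEq']
    · exact absurd h hij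
    · refine ⟨f^[j] p₀, hit j, i - j, by omega, ?_⟩
      rw [← Function.iterate_add_apply, Nat.sub_add_cancel h.le, hEq']
  obtain ⟨c, hc, hper⟩ := hper
  set m := Nat.find hper with hm_def
  obtain ⟨hm_pos, hmc⟩ : 0 < m ∧ f^[m] c = c := Nat.find_spec hper
  have hmin : ∀ m' < m, ¬(0 < m' ∧ f^[m'] c = c) := fun m' h => Nat.find_min hper h
  have horb : ∀ i, f^[i] c ∈ P := by
    intro i; induction i with
    | zero => exact hc
    | succ n ih => rw [Function.iterate_succ_apply']; exact hf _ ih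
  -- reduce exponents mod m
  have hmul : ∀ a r : ℕ, f^[m * a + r] c = f^[r] c := by
    intro a; induction a with
    | zero => simp
    | succ n ih =>
      intro r
      have : m * (n + 1) + r = (m * n + r) + m := by ring
      rw [this, Function.iterate_add_apply, hmc, ih]
  have hmod : ∀ i : ℕ, f^[i] c = f^[i % m] c := by
    intro i
    conv_lhs => rw [← Nat.div_add_mod i m]
    exact hmul _ _
  have hdist : ∀ i j : ℕ, i < m → j < m → f^[i] c = f^[j] c → i = j := by
    have key : ∀ i j : ℕ, i < j → j < m → f^[i] c ≠ f^[j] c := by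
      intro i j hij hjm hEq
      have h1 : f^[(m - j) + i] c = c := by
        rw [Function.iterate_add_apply, hEq, ← Function.iterate_add_apply,
          Nat.sub_add_cancel hjm.le, hmc]
      exact hmin ((m - j) + i) (by omega) ⟨by omega, h1⟩
    intro i j hi hj hEq
    rcases lt_trichotomy i j with h | h | h
    · exact absurd hEq (key i j h hj)
    · exact h
    · exact absurd hEq.symm (key j i h hi)
  set C : Set (PathIn V G) := Set.range (fun i => f^[i] c) with hC_def
  have hrep : ∀ p ∈ C, ∃ i, i < m ∧ p = f^[i] c := by
    rintro p ⟨i, rfl⟩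
    exact ⟨i % m, Nat.mod_lt _ hm_pos, hmod i⟩
  have hCP : C ⊆ P := by rintro p ⟨i, rfl⟩; exact horb i
  have hcC : c ∈ C := ⟨0, rfl⟩
  have hfC : ∀ p ∈ C, f p ∈ C := by
    rintro p ⟨i, rfl⟩
    exact ⟨i + 1, by show f^[i + 1] c = f (f^[i] c); rw [Function.iterate_succ_apply']⟩
  have hCinj : ∀ p ∈ C, ∀ q ∈ C, f p = f q → p = q := by
    intro p hp q hq hEq
    obtain ⟨i, him, rfl⟩ := hrep p hp
    obtain ⟨j, hjm, rfl⟩ := hrep q hq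
    have h1 : f^[(i + 1) % m] c = f^[(j + 1) % m] c := by
      rw [← hmod, ← hmod, Function.iterate_succ_apply', Function.iterate_succ_apply']
      exact hEq
    have h2 := hdist _ _ (Nat.mod_lt _ hm_pos) (Nat.mod_lt _ hm_pos) h1
    have : i = j := by
      rcases Nat.lt_or_ge (i + 1) m with h | h
      · rcases Nat.lt_or_ge (j + 1) m with h' | h'
        · rw [Nat.mod_eq_of_lt h, Nat.mod_eq_of_lt h'] at h2; omega
        · have hj1 : j + 1 = m := by omega
          rw [Nat.mod_eq_of_lt h, hj1, Nat.mod_self] at h2; omega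
      · have hi1 : i + 1 = m := by omega
        rcases Nat.lt_or_ge (j + 1) m with h' | h'
        · rw [hi1, Nat.mod_self, Nat.mod_eq_of_lt h'] at h2; omega
        · omega
    rw [this]
  have hfsurj : ∀ q ∈ C, ∃ p ∈ C, f p = q := by
    intro q hq
    obtain ⟨i, him, rfl⟩ := hrep q hq
    rcases Nat.eq_zero_or_pos i with rfl | hi
    · refine ⟨f^[m - 1] c, ⟨m - 1, rfl⟩, ?_⟩
      show f (f^[m - 1] c) = f^[0] c
      have h1 := Function.iterate_succ_apply' f (m - 1) c
      have h2 : f (f^[m - 1] c) = f^[m] c := by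
        rw [← h1]; congr 1; omega
      rw [h2, hmc]
      rfl
    · refine ⟨f^[i - 1] c, ⟨i - 1, rfl⟩, ?_⟩
      show f (f^[i - 1] c) = f^[i] c
      have h1 := Function.iterate_succ_apply' f (i - 1) c
      rw [← h1]
      congr 1
      omega
  -- the start of (f p).walk is not in the dropUntil part
  have hstart_notin : ∀ p, (hp : p ∈ P) → ∀ v, v = (f p).a →
      v ∉ ((f p).walk.dropUntil (w p) (hw p hp)).support := by
    rintro p hp v rfl
    exact start_not_mem_dropUntil (f p).walk (f p).isPath (hw p hp)
      (fun h => hwX p hp (h ▸ hPa _ (hf p hp)))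
  -- the rerouted path
  have htpath : ∀ p, (hp : p ∈ P) →
      (Walk.cons (hadj p hp) ((f p).walk.dropUntil (w p) (hw p hp))).IsPath := by
    intro p hp
    rw [Walk.cons_isPath_iff]
    refine ⟨(f p).isPath.dropUntil _, ?_⟩
    by_cases hfp : f p = p
    · intro hmem
      exact hstart_notin p hp p.a (congrArg PathIn.a hfp).symm hmem
    · intro hmem
      have hsub := Walk.support_dropUntil_subset (f p).walk (hw p hp)
      exact hG.2.2.2.2 p hp (f p) (hf p hp) (fun h => hfp h.symm) p.a
        (Walk.start_mem_support _) (hsub hmem)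
  set t : PathIn V G → PathIn V G := fun p =>
    if hp : p ∈ P then
      ⟨p.a, (f p).b, Walk.cons (hadj p hp) ((f p).walk.dropUntil (w p) (hw p hp)), htpath p hp⟩
    else p with ht_def
  have ht_eq : ∀ p, (hp : p ∈ P) → t p =
      ⟨p.a, (f p).b, Walk.cons (hadj p hp) ((f p).walk.dropUntil (w p) (hw p hp)),
        htpath p hp⟩ := by
    intro p hp; rw [ht_def]; exact dif_pos hp
  have ht_a : ∀ p ∈ P, (t p).a = p.a := by intro p hp; rw [ht_eq p hp]
  have ht_b : ∀ p ∈ P, (t p).b = (f p).b := by intro p hp; rw [ht_eq p hp]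
  have ht_supp : ∀ p, (hp : p ∈ P) →
      (t p).walk.support = p.a :: ((f p).walk.dropUntil (w p) (hw p hp)).support := by
    intro p hp; rw [ht_eq p hp]; exact SimpleGraph.Walk.support_cons _ _
  have ht_mem : ∀ p, (hp : p ∈ P) → ∀ v, v ∈ (t p).walk.support →
      v = p.a ∨ v ∈ ((f p).walk.dropUntil (w p) (hw p hp)).support := by
    intro p hp v hv
    rw [ht_supp p hp] at hv
    exact List.mem_cons.1 hv
  have hD_sub : ∀ p, (hp : p ∈ P) →
      ((f p).walk.dropUntil (w p) (hw p hp)).support ⊆ (f p).walk.support := by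
    intro p hp; exact Walk.support_dropUntil_subset _ _
  -- the new linkage
  set Q : Set (PathIn V G) := (P \ C) ∪ (t '' C) with hQ_def
  have hQ_elim : ∀ u ∈ Q, (u ∈ P ∧ u ∉ C) ∨ ∃ p ∈ C, u = t p := by
    rintro u (h | ⟨p, hp, rfl⟩)
    · exact Or.inl ⟨h.1, h.2⟩
    · exact Or.inr ⟨p, hp, rfl⟩
  have hGoodQ : Good G S X Y Q := by
    refine ⟨?_, ?_, ⟨?_, ?_, ?_⟩, ⟨?_, ?_, ?_⟩, ?_⟩
    · exact (hG.1.subset diff_subset).union ((hG.1.subset hCP).image t)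
    · -- supports in S
      intro u hu v hv
      rcases hQ_elim u hu with ⟨huP, _⟩ | ⟨p, hpC, rfl⟩
      · exact hG.2.1 u huP v hv
      · have hp := hCP hpC
        rcases ht_mem p hp v hv with rfl | h
        · exact hG.2.1 p hp _ (Walk.start_mem_support _)
        · exact hG.2.1 (f p) (hf p hp) v (hD_sub p hp h)
    · -- a maps to X
      intro u hu
      rcases hQ_elim u hu with ⟨huP, _⟩ | ⟨p, hpC, rfl⟩
      · exact hPa u huP
      · show (t p).a ∈ X
        rw [ht_a p (hCP hpC)]; exact hPa p (hCP hpC)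
    · -- a injective
      intro u₁ hu₁ u₂ hu₂ hEq
      replace hEq : u₁.a = u₂.a := hEq
      rcases hQ_elim u₁ hu₁ with ⟨h₁P, h₁C⟩ | ⟨p₁, hp₁C, rfl⟩ <;>
        rcases hQ_elim u₂ hu₂ with ⟨h₂P, h₂C⟩ | ⟨p₂, hp₂C, rfl⟩
      · exact hG.a_inj h₁P h₂P hEq
      · rw [ht_a p₂ (hCP hp₂C)] at hEq
        exact absurd (hG.a_inj h₁P (hCP hp₂C) hEq ▸ hp₂C) h₁C
      · rw [ht_a p₁ (hCP hp₁C)] at hEq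
        exact absurd ((hG.a_inj (hCP hp₁C) h₂P hEq).symm ▸ hp₁C) h₂C
      · rw [ht_a p₁ (hCP hp₁C), ht_a p₂ (hCP hp₂C)] at hEq
        rw [hG.a_inj (hCP hp₁C) (hCP hp₂C) hEq]
    · -- a surjective
      intro x hx
      obtain ⟨p, hpP, hpa⟩ := hG.2.2.1.2.2 hx
      by_cases hpC : p ∈ C
      · exact ⟨t p, Or.inr ⟨p, hpC, rfl⟩, by show (t p).a = x; rw [ht_a p hpP]; exact hpa⟩
      · exact ⟨p, Or.inl ⟨hpP, hpC⟩, hpa⟩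
    · -- b maps to Y
      intro u hu
      rcases hQ_elim u hu with ⟨huP, _⟩ | ⟨p, hpC, rfl⟩
      · exact hPb u huP
      · show (t p).b ∈ Y
        rw [ht_b p (hCP hpC)]; exact hPb _ (hf p (hCP hpC))
    · -- b injective
      intro u₁ hu₁ u₂ hu₂ hEq
      replace hEq : u₁.b = u₂.b := hEq
      rcases hQ_elim u₁ hu₁ with ⟨h₁P, h₁C⟩ | ⟨p₁, hp₁C, rfl⟩ <;>
        rcases hQ_elim u₂ hu₂ with ⟨h₂P, h₂C⟩ | ⟨p₂, hp₂C, rfl⟩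
      · exact hG.b_inj h₁P h₂P hEq
      · rw [ht_b p₂ (hCP hp₂C)] at hEq
        have : u₁ = f p₂ := hG.b_inj h₁P (hf p₂ (hCP hp₂C)) hEq
        exact absurd (this ▸ hfC p₂ hp₂C) h₁C
      · rw [ht_b p₁ (hCP hp₁C)] at hEq
        have : u₂ = f p₁ := hG.b_inj h₂P (hf p₁ (hCP hp₁C)) hEq.symm
        exact absurd (this ▸ hfC p₁ hp₁C) h₂C
      · rw [ht_b p₁ (hCP hp₁C), ht_b p₂ (hCP hp₂C)] at hEq
        have := hG.b_inj (hf p₁ (hCP hp₁C)) (hf p₂ (hCP hp₂C)) hEq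
        rw [hCinj p₁ hp₁C p₂ hp₂C this]
    · -- b surjective
      intro y hy
      obtain ⟨q, hqP, hqb⟩ := hG.2.2.2.1.2.2 hy
      by_cases hqC : q ∈ C
      · obtain ⟨p, hpC, rfl⟩ := hfsurj q hqC
        exact ⟨t p, Or.inr ⟨p, hpC, rfl⟩, by show (t p).b = y; rw [ht_b p (hCP hpC)]; exact hqb⟩
      · exact ⟨q, Or.inl ⟨hqP, hqC⟩, hqb⟩
    · -- disjointness
      intro u₁ hu₁ u₂ hu₂ hne v hv₁ hv₂
      rcases hQ_elim u₁ hu₁ with ⟨h₁P, h₁C⟩ | ⟨p₁, hp₁C, rfl⟩ <;>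
        rcases hQ_elim u₂ hu₂ with ⟨h₂P, h₂C⟩ | ⟨p₂, hp₂C, rfl⟩
      · exact hG.2.2.2.2 u₁ h₁P u₂ h₂P hne v hv₁ hv₂
      · -- untouched vs t p₂
        have hp₂ := hCP hp₂C
        rcases ht_mem p₂ hp₂ v hv₂ with rfl | h
        · exact h₁C (hG.eq_of_mem_support h₁P hp₂ hv₁ (Walk.start_mem_support _) ▸ hp₂C)
        · exact h₁C ((hG.eq_of_mem_support h₁P (hf p₂ hp₂) hv₁ (hD_sub p₂ hp₂ h)) ▸
            hfC p₂ hp₂C)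
      · -- t p₁ vs untouched
        have hp₁ := hCP hp₁C
        rcases ht_mem p₁ hp₁ v hv₁ with rfl | h
        · exact h₂C (hG.eq_of_mem_support h₂P hp₁ hv₂ (Walk.start_mem_support _) ▸ hp₁C)
        · exact h₂C ((hG.eq_of_mem_support h₂P (hf p₁ hp₁) hv₂ (hD_sub p₁ hp₁ h)) ▸
            hfC p₁ hp₁C)
      · -- t p₁ vs t p₂
        have hp₁ := hCP hp₁C
        have hp₂ := hCP hp₂C
        have hp₁₂ : p₁ ≠ p₂ := fun h => hne (by rw [h])
        have h₁ := ht_mem p₁ hp₁ v hv₁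
        have h₂ := ht_mem p₂ hp₂ v hv₂
        rcases h₁ with h₁ | h₁ <;> rcases h₂ with h₂ | h₂
        · exact hp₁₂ (hG.a_inj hp₁ hp₂ (h₁.symm.trans h₂))
        · subst h₁
          have hEqp : p₁ = f p₂ := hG.eq_of_mem_support hp₁ (hf p₂ hp₂)
            (Walk.start_mem_support _) (hD_sub p₂ hp₂ h₂)
          exact hstart_notin p₂ hp₂ p₁.a (congrArg PathIn.a hEqp) h₂
        · subst h₂
          have hEqp : p₂ = f p₁ := hG.eq_of_mem_support hp₂ (hf p₁ hp₁)
            (Walk.start_mem_support _) (hD_sub p₁ hp₁ h₁)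
          exact hstart_notin p₁ hp₁ p₂.a (congrArg PathIn.a hEqp) h₁
        · have hff : f p₁ = f p₂ := by
            by_contra hne'
            exact hG.2.2.2.2 (f p₁) (hf p₁ hp₁) (f p₂) (hf p₂ hp₂) hne' v
              (hD_sub p₁ hp₁ h₁) (hD_sub p₂ hp₂ h₂)
          exact hp₁₂ (hCinj p₁ hp₁C p₂ hp₂C hff)
  have hQP : Q = P := huniq Q hGoodQ
  have htcP : t c ∈ P := hQP ▸ (Or.inr ⟨c, hcC, rfl⟩)
  have htc : t c = c := hG.a_inj htcP hc (ht_a c hc)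
  have hsupp : c.walk.support = c.a :: ((f c).walk.dropUntil (w c) (hw c hc)).support := by
    rw [← ht_supp c hc, htc]
  have : c.walk.support.tail.head? = some (w c) := by
    rw [hsupp, List.tail_cons,
      SimpleGraph.Walk.support_eq_cons ((f c).walk.dropUntil (w c) (hw c hc))]
    rfl
  exact hfix c hc this

def FreeAt (G : SimpleGraph V) (S X : Set V) (p : PathIn V G) : Prop :=
  ∀ v ∈ S, G.Adj p.a v → v ∉ X → p.walk.support.tail.head? = some v

lemma exists_free {S X Y : Set V} {P : Set (PathIn V G)}
    (hS : Sing G S X Y P) (hne : S.Nonempty) : ∃ p ∈ P, FreeAt G S X p := by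
  classical
  obtain ⟨s, hsS⟩ := hne
  haveI : Nonempty V := ⟨s⟩
  by_contra hcon
  push_neg at hcon
  have hbad : ∀ p ∈ P, ∃ v, v ∈ S ∧ G.Adj p.a v ∧ v ∉ X ∧
      p.walk.support.tail.head? ≠ some v := by
    intro p hp
    have h := hcon p hp
    unfold FreeAt at h
    push_neg at h
    obtain ⟨v, hv1, hv2, hv3, hv4⟩ := h
    exact ⟨v, hv1, hv2, hv3, hv4⟩
  choose! w hw1 hw2 hw3 hw4 using hbad
  have hbad2 : ∀ p ∈ P, ∃ q, q ∈ P ∧ w p ∈ q.walk.support := by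
    intro p hp
    obtain ⟨q, hq1, hq2⟩ := hS.2.1 (w p) (hw1 p hp)
    exact ⟨q, hq1, hq2⟩
  choose! f hf1 hf2 using hbad2
  obtain ⟨p₀, hp₀, -⟩ := hS.2.1 s hsS
  exact reroute hS.1 hS.2.2 f w hf1 hf2 hw2 hw3 hw4 p₀ hp₀

lemma prepend {S S' B0 : Set V} {n : ℕ} {bag' : Fin (n + 1) → Set V} {K : ℕ}
    (hS'S : S' ⊆ S) (hB0S : B0 ⊆ S)
    (hbagS : ∀ i, bag' i ⊆ S')
    (hcov : ∀ v ∈ S', ∃ i, v ∈ bag' i)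
    (hedge : ∀ u v, u ∈ S' → v ∈ S' → G.Adj u v → ∃ i, u ∈ bag' i ∧ v ∈ bag' i)
    (hint : ∀ i j k : Fin (n + 1), i ≤ j → j ≤ k → bag' i ∩ bag' k ⊆ bag' j)
    (hsize : ∀ i, (bag' i).ncard ≤ K)
    (hcover0 : ∀ v ∈ S, v ∉ S' → v ∈ B0)
    (hedge0 : ∀ u v, u ∈ S → v ∈ S → G.Adj u v → ¬(u ∈ S' ∧ v ∈ S') → u ∈ B0 ∧ v ∈ B0)
    (hcap : B0 ∩ S' ⊆ bag' 0)
    (hB0size : B0.ncard ≤ K) :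
    ∃ bag : Fin (n + 1 + 1) → Set V, bag 0 = B0 ∧ (∀ i, bag i ⊆ S) ∧
      (∀ v ∈ S, ∃ i, v ∈ bag i) ∧
      (∀ u v, u ∈ S → v ∈ S → G.Adj u v → ∃ i, u ∈ bag i ∧ v ∈ bag i) ∧
      (∀ i j k : Fin (n + 1 + 1), i ≤ j → j ≤ k → bag i ∩ bag k ⊆ bag j) ∧
      (∀ i, (bag i).ncard ≤ K) := by
  classical
  refine ⟨fun i => if h : i.val = 0 then B0 else bag' ⟨i.val - 1, by omega⟩, ?_, ?_, ?_, ?_, ?_, ?_⟩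
  · simp
  · intro i
    by_cases h : i.val = 0
    · simpa [h] using hB0S
    · simpa [h] using (hbagS _).trans hS'S
  · intro v hv
    by_cases hv' : v ∈ S'
    · obtain ⟨i, hi⟩ := hcov v hv'
      refine ⟨⟨i.val + 1, by omega⟩, ?_⟩
      simpa using hi
    · exact ⟨0, by simpa using hcover0 v hv hv'⟩
  · intro u v hu hv hadj
    by_cases h : u ∈ S' ∧ v ∈ S'
    · obtain ⟨i, hi1, hi2⟩ := hedge u v h.1 h.2 hadj
      refine ⟨⟨i.val + 1, by omega⟩, ?_, ?_⟩ <;> simpa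
    · obtain ⟨h1, h2⟩ := hedge0 u v hu hv hadj h
      exact ⟨0, by simpa using h1, by simpa using h2⟩
  · intro i j k hij hjk v hv
    rw [Fin.le_def] at hij hjk
    by_cases hj : j.val = 0
    · have hi : i.val = 0 := by omega
      have := hv.1
      simp only [dif_pos hi] at this
      simpa [hj] using this
    · by_cases hi : i.val = 0
      · have hk : ¬(k.val = 0) := by omega
        have hvB : v ∈ B0 := by simpa [hi] using hv.1
        have hvk : v ∈ bag' ⟨k.val - 1, by omega⟩ := by simpa [hk] using hv.2
        have hvS' : v ∈ S' := hbagS _ hvk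
        have hv0 : v ∈ bag' 0 := hcap ⟨hvB, hvS'⟩
        have := hint 0 ⟨j.val - 1, by omega⟩ ⟨k.val - 1, by omega⟩
          (by simp [Fin.le_def]) (by rw [Fin.le_def]; simp; omega) ⟨hv0, hvk⟩
        simpa [hj] using this
      · have hk : ¬(k.val = 0) := by omega
        have hvi : v ∈ bag' ⟨i.val - 1, by omega⟩ := by simpa [hi] using hv.1
        have hvk : v ∈ bag' ⟨k.val - 1, by omega⟩ := by simpa [hk] using hv.2
        have := hint ⟨i.val - 1, by omega⟩ ⟨j.val - 1, by omega⟩ ⟨k.val - 1, by omega⟩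
          (by rw [Fin.le_def]; simp; omega) (by rw [Fin.le_def]; simp; omega) ⟨hvi, hvk⟩
        simpa [hj] using this
  · intro i
    by_cases h : i.val = 0
    · simpa [h] using hB0size
    · simpa [h] using hsize _

lemma Good.X_sub {S X Y : Set V} {P : Set (PathIn V G)} (hG : Good G S X Y P) : X ⊆ S := by
  intro x hx
  obtain ⟨p, hp, hpa⟩ := hG.2.2.1.2.2 hx
  exact hpa ▸ hG.2.1 p hp p.a (Walk.start_mem_support _)

lemma main (N : ℕ) : ∀ (S X Y : Set V) (P : Set (PathIn V G)), S.Finite → S.ncard ≤ N →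
    Sing G S X Y P →
    ∃ (n : ℕ) (bag : Fin (n + 1) → Set V),
      X ⊆ bag 0 ∧ (∀ i, bag i ⊆ S) ∧
      (∀ v ∈ S, ∃ i, v ∈ bag i) ∧
      (∀ u v, u ∈ S → v ∈ S → G.Adj u v → ∃ i, u ∈ bag i ∧ v ∈ bag i) ∧
      (∀ i j k : Fin (n + 1), i ≤ j → j ≤ k → bag i ∩ bag k ⊆ bag j) ∧
      (∀ i, (bag i).ncard ≤ P.ncard + 1) := by
  have hempty : ∀ (X Y : Set V) (P : Set (PathIn V G)), Sing G (∅ : Set V) X Y P →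
      ∃ (n : ℕ) (bag : Fin (n + 1) → Set V),
      X ⊆ bag 0 ∧ (∀ i, bag i ⊆ (∅ : Set V)) ∧
      (∀ v ∈ (∅ : Set V), ∃ i, v ∈ bag i) ∧
      (∀ u v, u ∈ (∅ : Set V) → v ∈ (∅ : Set V) → G.Adj u v → ∃ i, u ∈ bag i ∧ v ∈ bag i) ∧
      (∀ i j k : Fin (n + 1), i ≤ j → j ≤ k → bag i ∩ bag k ⊆ bag j) ∧
      (∀ i, (bag i).ncard ≤ P.ncard + 1) := by
    intro X Y P hSing
    refine ⟨0, fun _ => ∅, ?_, by simp, by simp, by simp, by simp, by simp⟩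
    intro x hx
    obtain ⟨p, hp, -⟩ := hSing.1.2.2.1.2.2 hx
    exact absurd (hSing.1.2.1 p hp p.a (Walk.start_mem_support _)) (Set.notMem_empty _)
  induction N with
  | zero =>
    intro S X Y P hfin hcard hSing
    have hS : S = ∅ := (Set.ncard_eq_zero hfin).1 (le_antisymm hcard (Nat.zero_le _))
    subst hS
    exact hempty X Y P hSing
  | succ N ih =>
    intro S X Y P hfin hcard hSing
    rcases S.eq_empty_or_nonempty with rfl | hSne
    · exact hempty X Y P hSing
    obtain ⟨hG, hcovS, huniq⟩ := hSing
    obtain ⟨p, hpP, hfree⟩ := exists_free ⟨hG, hcovS, huniq⟩ hSne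
    obtain ⟨a, b, wlk, hpath⟩ := p
    cases wlk with
    | nil =>
      set p : PathIn V G := ⟨a, a, Walk.nil, hpath⟩ with hp_def
      have hpsupp : p.walk.support = [a] := rfl
      have haS : a ∈ S := hG.2.1 p hpP a (by simp [hpsupp])
      have haX : a ∈ X := hG.2.2.1.1 hpP
      have haY : a ∈ Y := hG.2.2.2.1.1 hpP
      have ha_not : ∀ q₂ ∈ P, q₂ ≠ p → a ∉ q₂.walk.support := by
        intro q₂ hq₂ hne
        exact hG.2.2.2.2 p hpP q₂ hq₂ (fun h => hne h.symm) a (by simp [hpsupp])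
      set S' := S \ {a} with hS'def
      set X' := X \ {a} with hX'def
      set Y' := Y \ {a} with hY'def
      set P' := P \ {p} with hP'def
      have hsubS' : ∀ q₂ ∈ P', ∀ v ∈ q₂.walk.support, v ∈ S' := by
        intro q₂ hq₂ v hv
        refine ⟨hG.2.1 q₂ hq₂.1 v hv, ?_⟩
        simp only [Set.mem_singleton_iff]
        rintro rfl
        exact ha_not q₂ hq₂.1 hq₂.2 hv
      have hGood' : Good G S' X' Y' P' := by
        refine ⟨hG.1.subset diff_subset, hsubS', ⟨?_, ?_, ?_⟩, ⟨?_, ?_, ?_⟩, ?_⟩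
        · intro q₂ hq₂
          refine ⟨hG.2.2.1.1 hq₂.1, ?_⟩
          simp only [Set.mem_singleton_iff]
          intro h
          exact hq₂.2 (hG.a_inj hq₂.1 hpP h)
        · exact fun q₁ h₁ q₂ h₂ hEq => hG.2.2.1.2.1 h₁.1 h₂.1 hEq
        · intro x hx
          obtain ⟨q₂, hq₂, hqa⟩ := hG.2.2.1.2.2 hx.1
          refine ⟨q₂, ⟨hq₂, fun hmem => ?_⟩, hqa⟩
          rw [Set.mem_singleton_iff] at hmem
          subst hmem
          exact hx.2 (by rw [Set.mem_singleton_iff]; exact hqa.symm)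
        · intro q₂ hq₂
          refine ⟨hG.2.2.2.1.1 hq₂.1, ?_⟩
          simp only [Set.mem_singleton_iff]
          intro h
          exact hq₂.2 (hG.b_inj hq₂.1 hpP h)
        · exact fun q₁ h₁ q₂ h₂ hEq => hG.2.2.2.1.2.1 h₁.1 h₂.1 hEq
        · intro y hy
          obtain ⟨q₂, hq₂, hqb⟩ := hG.2.2.2.1.2.2 hy.1
          refine ⟨q₂, ⟨hq₂, fun hmem => ?_⟩, hqb⟩
          rw [Set.mem_singleton_iff] at hmem
          subst hmem
          exact hy.2 (by rw [Set.mem_singleton_iff]; exact hqb.symm)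
        · exact fun q₁ h₁ q₂ h₂ hne v hv => hG.2.2.2.2 q₁ h₁.1 q₂ h₂.1 hne v hv
      have hcov' : ∀ v ∈ S', ∃ q₂ ∈ P', v ∈ q₂.walk.support := by
        intro v hv
        obtain ⟨q₂, hq₂, hvq⟩ := hcovS v hv.1
        by_cases hqp : q₂ = p
        · subst hqp
          rw [hpsupp] at hvq
          simp at hvq
          exact absurd (Set.mem_singleton_iff.2 hvq) hv.2
        · exact ⟨q₂, ⟨hq₂, fun h => hqp (Set.mem_singleton_iff.1 h)⟩, hvq⟩
      have huniq' : ∀ Q', Good G S' X' Y' Q' → Q' = P' := by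
        intro Q' hQ'
        have hpQ' : p ∉ Q' := by
          intro h
          exact (hQ'.2.1 p h a (by simp [hpsupp])).2 rfl
        have hGoodQ : Good G S X Y (insert p Q') := by
          refine ⟨hQ'.1.insert p, ?_, ⟨?_, ?_, ?_⟩, ⟨?_, ?_, ?_⟩, ?_⟩
          · rintro q₂ (rfl | hq₂) v hv
            · rw [hpsupp] at hv; simp at hv; subst hv; exact haS
            · exact (hQ'.2.1 q₂ hq₂ v hv).1
          · rintro q₂ (rfl | hq₂)
            · exact haX
            · exact (hQ'.2.2.1.1 hq₂).1
          · rintro q₁ (rfl | h₁) q₂ (rfl | h₂) hEq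
            · rfl
            · exact absurd hEq.symm (by simpa using (hQ'.2.2.1.1 h₂).2)
            · exact absurd hEq (by simpa using (hQ'.2.2.1.1 h₁).2)
            · exact hQ'.2.2.1.2.1 h₁ h₂ hEq
          · intro x hx
            by_cases hxa : x = a
            · exact ⟨p, Or.inl rfl, hxa.symm⟩
            · obtain ⟨q₂, hq₂, hqa⟩ := hQ'.2.2.1.2.2 ⟨hx, by simpa using hxa⟩
              exact ⟨q₂, Or.inr hq₂, hqa⟩
          · rintro q₂ (rfl | hq₂)
            · exact haY
            · exact (hQ'.2.2.2.1.1 hq₂).1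
          · rintro q₁ (rfl | h₁) q₂ (rfl | h₂) hEq
            · rfl
            · exact absurd hEq.symm (by simpa using (hQ'.2.2.2.1.1 h₂).2)
            · exact absurd hEq (by simpa using (hQ'.2.2.2.1.1 h₁).2)
            · exact hQ'.2.2.2.1.2.1 h₁ h₂ hEq
          · intro y hy
            by_cases hya : y = a
            · exact ⟨p, Or.inl rfl, hya.symm⟩
            · obtain ⟨q₂, hq₂, hqb⟩ := hQ'.2.2.2.1.2.2 ⟨hy, by simpa using hya⟩
              exact ⟨q₂, Or.inr hq₂, hqb⟩
          · rintro q₁ (rfl | h₁) q₂ (rfl | h₂) hne v hv₁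
            · exact absurd rfl hne
            · rw [hpsupp] at hv₁; simp at hv₁
              intro hv₂
              exact (hQ'.2.1 q₂ h₂ v hv₂).2 (Set.mem_singleton_iff.2 hv₁)
            · intro hv₂
              rw [hpsupp] at hv₂; simp at hv₂
              exact (hQ'.2.1 q₁ h₁ v hv₁).2 (Set.mem_singleton_iff.2 hv₂)
            · exact hQ'.2.2.2.2 q₁ h₁ q₂ h₂ hne v hv₁
        have hQP := huniq _ hGoodQ
        calc Q' = insert p Q' \ {p} := (Set.insert_sdiff_self_of_notMem hpQ').symm
          _ = P \ {p} := by rw [hQP]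
      have hS'fin : S'.Finite := hfin.diff
      have hS'card : S'.ncard ≤ N := by
        have h1 : S'.ncard = S.ncard - 1 := Set.ncard_diff_singleton_of_mem haS
        omega
      obtain ⟨n, bag', hXb, hbS, hcov2, hedge2, hint2, hsize2⟩ :=
        ih S' X' Y' P' hS'fin hS'card ⟨hGood', hcov', huniq'⟩
      have hP'card : P'.ncard ≤ P.ncard := Set.ncard_le_ncard diff_subset hG.1
      have hkey : ∀ z ∈ S, G.Adj a z → z ∈ X := by
        intro z hz hadjz
        by_contra hzX
        have h2 := hfree z hz hadjz hzX
        rw [hpsupp] at h2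
        simp at h2
      have hcover0 : ∀ v ∈ S, v ∉ S' → v ∈ X := by
        intro v hv hv'
        have hva : v = a := by
          by_contra hva
          exact hv' ⟨hv, by simpa using hva⟩
        subst hva; exact haX
      have hedge0 : ∀ u v, u ∈ S → v ∈ S → G.Adj u v → ¬(u ∈ S' ∧ v ∈ S') →
          u ∈ X ∧ v ∈ X := by
        intro u v hu hv hadj hnot
        have huv : u = a ∨ v = a := by
          by_contra hval
          push_neg at hval
          exact hnot ⟨⟨hu, by simpa using hval.1⟩, ⟨hv, by simpa using hval.2⟩⟩
        rcases huv with rfl | rfl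
        · exact ⟨haX, hkey v hv hadj⟩
        · exact ⟨hkey u hu hadj.symm, haX⟩
      have hcap : X ∩ S' ⊆ bag' 0 := by
        intro v hv
        exact hXb ⟨hv.1, hv.2.2⟩
      have hB0size : X.ncard ≤ P.ncard + 1 := by
        rw [hG.ncard_X]
        omega
      obtain ⟨bag, hbag0, hbagS, hbagcov, hbagedge, hbagint, hbagsize⟩ :=
        prepend (S := S) (S' := S') (B0 := X) (bag' := bag') (K := P.ncard + 1)
          diff_subset hG.X_sub hbS hcov2 hedge2 hint2
          (fun i => (hsize2 i).trans (by omega))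
          hcover0 hedge0 hcap hB0size
      exact ⟨n + 1, bag, by rw [hbag0], hbagS, hbagcov, hbagedge, hbagint, hbagsize⟩
    | cons hac q =>
      rename_i c
      set p : PathIn V G := ⟨a, b, Walk.cons hac q, hpath⟩ with hp_def
      have hq_path : q.IsPath := ((Walk.cons_isPath_iff hac q).1 hpath).1
      have ha_notq : a ∉ q.support := ((Walk.cons_isPath_iff hac q).1 hpath).2
      have hpsupp : p.walk.support = a :: q.support := Walk.support_cons hac q
      have hca : c ≠ a := hac.ne'
      have haS : a ∈ S := hG.2.1 p hpP a (by simp [hpsupp])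
      have hcS : c ∈ S := hG.2.1 p hpP c
        (by rw [hpsupp]; exact List.mem_cons_of_mem _ (Walk.start_mem_support q))
      have haX : a ∈ X := hG.2.2.1.1 hpP
      have hbY : b ∈ Y := hG.2.2.2.1.1 hpP
      have ha_not : ∀ q₂ ∈ P, q₂ ≠ p → a ∉ q₂.walk.support := by
        intro q₂ hq₂ hne
        exact hG.2.2.2.2 p hpP q₂ hq₂ (fun h => hne h.symm) a (by simp [hpsupp])
      have hcX : c ∉ X := by
        intro h
        obtain ⟨q₂, hq₂, hqa⟩ := hG.2.2.1.2.2 h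
        have h1 : c ∈ q₂.walk.support := hqa ▸ Walk.start_mem_support _
        have h2 : c ∈ p.walk.support := by
          rw [hpsupp]; exact List.mem_cons_of_mem _ (Walk.start_mem_support q)
        have h3 := hG.eq_of_mem_support hq₂ hpP h1 h2
        rw [h3] at hqa
        exact hca hqa.symm
      set p' : PathIn V G := ⟨c, b, q, hq_path⟩ with hp'_def
      set S' := S \ {a} with hS'def
      set X' := insert c (X \ {a}) with hX'def
      set P' := insert p' (P \ {p}) with hP'def
      have hqsubp : ∀ v ∈ q.support, v ∈ p.walk.support := by
        intro v hv; rw [hpsupp]; exact List.mem_cons_of_mem _ hv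
      have hsubS' : ∀ q₃ ∈ P', ∀ v ∈ q₃.walk.support, v ∈ S' := by
        rintro q₃ (rfl | ⟨h1, h2⟩) v hv
        · exact ⟨hG.2.1 p hpP v (hqsubp v hv), fun h => ha_notq ((Set.mem_singleton_iff.1 h) ▸ hv)⟩
        · exact ⟨hG.2.1 q₃ h1 v hv, fun h =>
            ha_not q₃ h1 (fun he => h2 (Set.mem_singleton_iff.2 he)) ((Set.mem_singleton_iff.1 h) ▸ hv)⟩
      have hGood' : Good G S' X' Y P' := by
        refine ⟨((hG.1.subset diff_subset).insert p'), hsubS', ⟨?_, ?_, ?_⟩, ⟨?_, ?_, ?_⟩, ?_⟩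
        · rintro q₃ (rfl | ⟨h1, h2⟩)
          · exact Set.mem_insert _ _
          · refine Set.mem_insert_of_mem _ ⟨hG.2.2.1.1 h1, ?_⟩
            simp only [Set.mem_singleton_iff]
            intro h
            exact h2 (Set.mem_singleton_iff.2 (hG.a_inj h1 hpP h))
        · rintro q₃ (rfl | ⟨h1, h2⟩) q₄ (rfl | ⟨h3, h4⟩) hEq
          · rfl
          · have h5 : c = q₄.a := hEq
            exact absurd (by rw [h5]; exact hG.2.2.1.1 h3) hcX
          · have h5 : q₃.a = c := hEq
            exact absurd (by rw [← h5]; exact hG.2.2.1.1 h1) hcX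
          · exact hG.a_inj h1 h3 hEq
        · rintro x (rfl | hx)
          · exact ⟨p', Set.mem_insert _ _, rfl⟩
          · obtain ⟨q₃, hq₃, hqa⟩ := hG.2.2.1.2.2 hx.1
            refine ⟨q₃, Set.mem_insert_of_mem _ ⟨hq₃, fun h => ?_⟩, hqa⟩
            rw [Set.mem_singleton_iff] at h
            subst h
            exact hx.2 (Set.mem_singleton_iff.2 hqa.symm)
        · rintro q₃ (rfl | ⟨h1, h2⟩)
          · exact hbY
          · exact hG.2.2.2.1.1 h1
        · rintro q₃ (rfl | ⟨h1, h2⟩) q₄ (rfl | ⟨h3, h4⟩) hEq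
          · rfl
          · exact absurd (Set.mem_singleton_iff.2 (hG.b_inj h3 hpP hEq.symm)) h4
          · exact absurd (Set.mem_singleton_iff.2 (hG.b_inj h1 hpP hEq)) h2
          · exact hG.b_inj h1 h3 hEq
        · intro y hy
          obtain ⟨q₃, hq₃, hqb⟩ := hG.2.2.2.1.2.2 hy
          by_cases hq₃p : q₃ = p
          · subst hq₃p
            exact ⟨p', Set.mem_insert _ _, hqb⟩
          · exact ⟨q₃, Set.mem_insert_of_mem _ ⟨hq₃, fun h => hq₃p (Set.mem_singleton_iff.1 h)⟩, hqb⟩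
        · rintro q₃ (rfl | ⟨h1, h2⟩) q₄ (rfl | ⟨h3, h4⟩) hne v hv
          · exact absurd rfl hne
          · exact hG.2.2.2.2 p hpP q₄ h3 (fun h => h4 (Set.mem_singleton_iff.2 h.symm)) v (hqsubp v hv)
          · intro hv₂
            exact hG.2.2.2.2 q₃ h1 p hpP (fun h => h2 (Set.mem_singleton_iff.2 h)) v hv (hqsubp v hv₂)
          · exact hG.2.2.2.2 q₃ h1 q₄ h3 hne v hv
      have hcov' : ∀ v ∈ S', ∃ q₃ ∈ P', v ∈ q₃.walk.support := by
        intro v hv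
        obtain ⟨q₃, hq₃, hvq⟩ := hcovS v hv.1
        by_cases hqp : q₃ = p
        · subst hqp
          rw [hpsupp] at hvq
          rcases List.mem_cons.1 hvq with rfl | hvq2
          · exact absurd (Set.mem_singleton_iff.2 rfl) hv.2
          · exact ⟨p', Set.mem_insert _ _, hvq2⟩
        · exact ⟨q₃, Set.mem_insert_of_mem _ ⟨hq₃, fun h => hqp (Set.mem_singleton_iff.1 h)⟩, hvq⟩
      have huniq' : ∀ Q', Good G S' X' Y Q' → Q' = P' := by
        intro Q' hQ'
        have hcX' : c ∈ X' := Set.mem_insert _ _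
        obtain ⟨r, hrQ', hra⟩ := hQ'.2.2.1.2.2 hcX'
        obtain ⟨ra, rb, rwk, rpath⟩ := r
        have hra' : c = ra := Eq.symm hra
        subst hra'
        have harw : a ∉ rwk.support := by
          intro h
          exact (hQ'.2.1 _ hrQ' a h).2 rfl
        have hrplus_path : (Walk.cons hac rwk).IsPath :=
          (Walk.cons_isPath_iff hac rwk).2 ⟨rpath, harw⟩
        set r : PathIn V G := ⟨c, rb, rwk, rpath⟩ with hr_def
        set rp : PathIn V G := ⟨a, rb, Walk.cons hac rwk, hrplus_path⟩ with hrp_def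
        have hrpsupp : rp.walk.support = a :: rwk.support := Walk.support_cons hac rwk
        have hrpnotin : rp ∉ Q' \ {r} := by
          rintro ⟨h1, -⟩
          exact (hQ'.2.1 rp h1 a (by simp [hrpsupp])).2 rfl
        have hGoodQ : Good G S X Y (insert rp (Q' \ {r})) := by
          refine ⟨((hQ'.1.subset diff_subset).insert rp), ?_, ⟨?_, ?_, ?_⟩, ⟨?_, ?_, ?_⟩, ?_⟩
          · rintro q₃ (rfl | ⟨h1, h2⟩) v hv
            · rw [hrpsupp] at hv
              rcases List.mem_cons.1 hv with rfl | hv2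
              · exact haS
              · exact (hQ'.2.1 r hrQ' v hv2).1
            · exact (hQ'.2.1 q₃ h1 v hv).1
          · rintro q₃ (rfl | ⟨h1, h2⟩)
            · exact haX
            · rcases hQ'.2.2.1.1 h1 with h | h
              · exact absurd (Set.mem_singleton_iff.2 (hQ'.a_inj h1 hrQ' h)) h2
              · exact h.1
          · rintro q₃ (rfl | ⟨h1, h2⟩) q₄ (rfl | ⟨h3, h4⟩) hEq
            · rfl
            · rcases hQ'.2.2.1.1 h3 with h | h
              · exact absurd (hEq.trans h) hca.symm
              · exact absurd hEq.symm (fun he => h.2 (Set.mem_singleton_iff.2 he))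
            · rcases hQ'.2.2.1.1 h1 with h | h
              · exact absurd (hEq.symm.trans h) hca.symm
              · exact absurd hEq (fun he => h.2 (Set.mem_singleton_iff.2 he))
            · exact hQ'.a_inj h1 h3 hEq
          · intro x hx
            by_cases hxa : x = a
            · exact ⟨rp, Set.mem_insert _ _, hxa.symm⟩
            · have hx' : x ∈ X' := Set.mem_insert_of_mem _ ⟨hx, fun h => hxa (Set.mem_singleton_iff.1 h)⟩
              obtain ⟨q₃, hq₃, hqa⟩ := hQ'.2.2.1.2.2 hx'
              refine ⟨q₃, Set.mem_insert_of_mem _ ⟨hq₃, fun h => ?_⟩, hqa⟩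
              rw [Set.mem_singleton_iff] at h
              subst h
              have hqa' : c = x := hqa
              exact hcX (by rw [hqa']; exact hx)
          · rintro q₃ (rfl | ⟨h1, h2⟩)
            · show rb ∈ Y
              exact hQ'.2.2.2.1.1 hrQ'
            · exact hQ'.2.2.2.1.1 h1
          · rintro q₃ (rfl | ⟨h1, h2⟩) q₄ (rfl | ⟨h3, h4⟩) hEq
            · rfl
            · exact absurd (Set.mem_singleton_iff.2 (hQ'.b_inj h3 hrQ' hEq.symm)) h4
            · exact absurd (Set.mem_singleton_iff.2 (hQ'.b_inj h1 hrQ' hEq)) h2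
            · exact hQ'.b_inj h1 h3 hEq
          · intro y hy
            obtain ⟨q₃, hq₃, hqb⟩ := hQ'.2.2.2.1.2.2 hy
            by_cases hq₃r : q₃ = r
            · subst hq₃r
              exact ⟨rp, Set.mem_insert _ _, hqb⟩
            · exact ⟨q₃, Set.mem_insert_of_mem _ ⟨hq₃, fun h => hq₃r (Set.mem_singleton_iff.1 h)⟩, hqb⟩
          · rintro q₃ (rfl | ⟨h1, h2⟩) q₄ (rfl | ⟨h3, h4⟩) hne v hv
            · exact absurd rfl hne
            · rw [hrpsupp] at hv
              rcases List.mem_cons.1 hv with rfl | hv2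
              · intro hv₂
                exact (hQ'.2.1 q₄ h3 v hv₂).2 rfl
              · exact hQ'.2.2.2.2 r hrQ' q₄ h3 (fun h => h4 (Set.mem_singleton_iff.2 h.symm)) v hv2
            · intro hv₂
              rw [hrpsupp] at hv₂
              rcases List.mem_cons.1 hv₂ with heq | hv2
              · exact (hQ'.2.1 q₃ h1 v hv).2 (Set.mem_singleton_iff.2 heq)
              · exact hQ'.2.2.2.2 q₃ h1 r hrQ' (fun h => h2 (Set.mem_singleton_iff.2 h)) v hv hv2
            · exact hQ'.2.2.2.2 q₃ h1 q₄ h3 hne v hv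
        have hQP := huniq _ hGoodQ
        have hpQ : p ∈ insert rp (Q' \ {r}) := hQP.symm ▸ hpP
        have hpr : p = rp := by
          rcases hpQ with h | ⟨h1, -⟩
          · exact h
          · exact absurd ((hQ'.2.1 p h1 a (by simp [hpsupp])).2 rfl) not_false
        rw [hp_def, hrp_def, PathIn.mk.injEq] at hpr
        obtain ⟨h9, hbrb, hwEq⟩ := hpr
        subst hbrb
        have hwalk : Walk.cons hac q = Walk.cons hac rwk := eq_of_heq hwEq
        rw [Walk.cons.injEq] at hwalk
        obtain ⟨-, hq⟩ := hwalk
        have hq' : q = rwk := eq_of_heq hq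
        subst hq'
        have hrp' : r = p' := rfl
        have h1 : insert rp (Q' \ {r}) \ {rp} = Q' \ {r} :=
          Set.insert_sdiff_self_of_notMem hrpnotin
        have h2 : Q' \ {r} = P \ {p} := by
          rw [← h1, hQP]
        have h3 : Q' = insert r (Q' \ {r}) := by
          rw [Set.insert_diff_singleton, Set.insert_eq_self.2 hrQ']
        rw [h3, h2, hrp']
      have hS'fin : S'.Finite := hfin.diff
      have hS'card : S'.ncard ≤ N := by
        have h1 : S'.ncard = S.ncard - 1 := Set.ncard_diff_singleton_of_mem haS
        omega
      obtain ⟨n, bag', hXb, hbS, hcov2, hedge2, hint2, hsize2⟩ :=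
        ih S' X' Y P' hS'fin hS'card ⟨hGood', hcov', huniq'⟩
      have hP'card : P'.ncard ≤ P.ncard := by
        have h1 : P'.ncard ≤ (P \ {p}).ncard + 1 := Set.ncard_insert_le _ _
        have h2 : (P \ {p}).ncard = P.ncard - 1 := Set.ncard_diff_singleton_of_mem hpP
        have h3 : 0 < P.ncard := (Set.ncard_pos hG.1).2 ⟨p, hpP⟩
        omega
      have hkey : ∀ z ∈ S, G.Adj a z → z ∈ insert c X := by
        intro z hz hadjz
        by_cases hzX : z ∈ X
        · exact Set.mem_insert_of_mem _ hzX
        · have h2 := hfree z hz hadjz hzX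
          rw [hpsupp] at h2
          rw [List.tail_cons, Walk.support_eq_cons q] at h2
          simp only [List.head?_cons, Option.some.injEq] at h2
          exact Set.mem_insert_iff.2 (Or.inl h2.symm)
      have hcover0 : ∀ v ∈ S, v ∉ S' → v ∈ insert c X := by
        intro v hv hv'
        have hva : v = a := by
          by_contra hva
          exact hv' ⟨hv, by simpa using hva⟩
        subst hva
        exact Set.mem_insert_of_mem _ haX
      have hedge0 : ∀ u v, u ∈ S → v ∈ S → G.Adj u v → ¬(u ∈ S' ∧ v ∈ S') →
          u ∈ insert c X ∧ v ∈ insert c X := by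
        intro u v hu hv hadj hnot
        have huv : u = a ∨ v = a := by
          by_contra hval
          push_neg at hval
          exact hnot ⟨⟨hu, by simpa using hval.1⟩, ⟨hv, by simpa using hval.2⟩⟩
        rcases huv with rfl | rfl
        · exact ⟨Set.mem_insert_of_mem _ haX, hkey v hv hadj⟩
        · exact ⟨hkey u hu hadj.symm, Set.mem_insert_of_mem _ haX⟩
      have hcap : insert c X ∩ S' ⊆ bag' 0 := by
        rintro v ⟨hv1, hv2⟩
        rcases hv1 with rfl | hv1
        · exact hXb (Set.mem_insert _ _)
        · exact hXb (Set.mem_insert_of_mem _ ⟨hv1, hv2.2⟩)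
      have hB0size : (insert c X).ncard ≤ P.ncard + 1 := by
        have h1 : (insert c X).ncard ≤ X.ncard + 1 := Set.ncard_insert_le _ _
        have h2 := hG.ncard_X
        omega
      obtain ⟨bag, hbag0, hbagS, hbagcov, hbagedge, hbagint, hbagsize⟩ :=
        prepend (S := S) (S' := S') (B0 := insert c X) (bag' := bag') (K := P.ncard + 1)
          diff_subset (by rintro v (rfl | hv); exacts [hcS, hG.X_sub hv]) hbS hcov2 hedge2 hint2
          (fun i => (hsize2 i).trans (by omega))
          hcover0 hedge0 hcap hB0size
      exact ⟨n + 1, bag, by rw [hbag0]; exact Set.subset_insert _ _,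
        hbagS, hbagcov, hbagedge, hbagint, hbagsize⟩


theorem stmt_2_aux {V : Type} [Fintype V] {G : SimpleGraph V} (X Y : Set V)
    (hXY : X.ncard = Y.ncard)
    (P : Set (PathIn V G)) (hP : IsSingularLinkage G X Y P) :
    PathwidthAtMost G P.ncard := by
  classical
  obtain ⟨⟨hfin, hcard, hXY', hends, hdisj⟩, hcov, huniq⟩ := hP
  have hainj : Set.InjOn (fun p => p.a) P := by
    intro p hp q hq hEq
    by_contra hne
    exact hdisj p hp q hq hne p.a (Walk.start_mem_support _)
      (by rw [show p.a = q.a from hEq]; exact Walk.start_mem_support _)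
  have hbinj : Set.InjOn (fun p => p.b) P := by
    intro p hp q hq hEq
    by_contra hne
    exact hdisj p hp q hq hne p.b (Walk.end_mem_support _)
      (by rw [show p.b = q.b from hEq]; exact Walk.end_mem_support _)
  have haimg : (fun p => p.a) '' P = X := by
    apply Set.eq_of_subset_of_ncard_le
    · rintro x ⟨p, hp, rfl⟩
      exact (hends p hp).1
    · rw [Set.ncard_image_of_injOn hainj]
      omega
    · exact Set.toFinite _
  have hbimg : (fun p => p.b) '' P = Y := by
    apply Set.eq_of_subset_of_ncard_le
    · rintro y ⟨p, hp, rfl⟩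
      exact (hends p hp).2
    · rw [Set.ncard_image_of_injOn hbinj]
      omega
    · exact Set.toFinite _
  have hGood : Good G Set.univ X Y P :=
    ⟨hfin, fun _ _ _ _ => Set.mem_univ _,
      ⟨fun p hp => (hends p hp).1, hainj, haimg.superset⟩,
      ⟨fun p hp => (hends p hp).2, hbinj, hbimg.superset⟩, hdisj⟩
  have huniv : ∀ Q, Good G Set.univ X Y Q → Q = P := by
    intro Q hQ
    apply huniq
    refine ⟨hQ.1, ?_, hXY', fun p hp => ⟨hQ.2.2.1.1 hp, hQ.2.2.2.1.1 hp⟩, hQ.2.2.2.2⟩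
    rw [← hQ.2.2.1.image_eq, Set.ncard_image_of_injOn hQ.2.2.1.2.1]
  have hSing : Sing G Set.univ X Y P := ⟨hGood, fun v _ => hcov v, huniv⟩
  obtain ⟨n, bag, hX0, hbS, hcovb, hedgeb, hintb, hsize⟩ :=
    main (Set.univ : Set V).ncard Set.univ X Y P Set.finite_univ le_rfl hSing
  exact ⟨n + 1, bag, ⟨fun v => hcovb v (Set.mem_univ v),
    fun u v h => hedgeb u v (Set.mem_univ u) (Set.mem_univ v) h, hintb⟩, hsize⟩

end Stmt2Aux
end Stmt2AuxSection

theorem stmt_2 {V : Type} [Fintype V] (G : SimpleGraph V) (X Y : Set V) (k : ℕ)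
    (hX : X.ncard = k) (hY : Y.ncard = k)
    (P : Set (PathIn V G)) (hP : IsSingularLinkage G X Y P) :
    PathwidthAtMost G P.ncard :=
  Stmt2Aux.stmt_2_aux X Y (by omega) P hP
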